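/- arXiv:1706.01767 — 3 statements merged into one kernel-verified Lean document; each statement's English description precedes it below -/
import Mathlib

section
/- Let τ > 1 be a real algebraic integer whose minimal polynomial P(x) over ℚ is reciprocal of even degree d ≥ 4. Suppose there exists n ∈ ℕ, n ≥ 2, such that τⁿ has minimal polynomial P_n(x) = 1 + a_{1,n}x + a_{2,n}x² + ⋯ + a_{d-1,n}x^{d-1} + x^d over ℚ, which is also monic reciprocal of degree d with integer coefficients, satisfying |a_{d-1,n}| > (1/2)·(d/(d-2))·(2 + Σ_{k=2}^{d-2} |a_{k,n}|). Then τ is a Salem number: τ⁻¹ is a root of P(x) and all complex roots of P(x) other than τ and τ⁻¹ have absolute value 1. -/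
open Polynomial Complex

private lemma recip_aeval_inv {K : Type*} [Field K] [Algebra ℚ K] (R : ℚ[X]) (d : ℕ)
    (hdeg : R.natDegree = d) (hrec : ∀ k ≤ d, R.coeff k = R.coeff (d - k))
    (x : K) (hx : x ≠ 0) (hroot : (Polynomial.aeval x) R = 0) :
    (Polynomial.aeval x⁻¹) R = 0 := by
  have h0 : (Polynomial.aeval x) R = ∑ i ∈ Finset.range (d + 1), R.coeff i • x ^ i :=
    Polynomial.aeval_eq_sum_range' (by omega) x
  have h1 : (Polynomial.aeval x⁻¹) R = ∑ i ∈ Finset.range (d + 1), R.coeff i • x⁻¹ ^ i :=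
    Polynomial.aeval_eq_sum_range' (by omega) x⁻¹
  have key : x ^ d * ∑ i ∈ Finset.range (d + 1), R.coeff i • x⁻¹ ^ i
      = ∑ i ∈ Finset.range (d + 1), R.coeff i • x ^ i := by
    rw [Finset.mul_sum, ← Finset.sum_range_reflect (fun i => R.coeff i • x ^ i) (d + 1)]
    refine Finset.sum_congr rfl fun i hi => ?_
    rw [Finset.mem_range] at hi
    have hile : i ≤ d := by omega
    have h2 : d + 1 - 1 - i = d - i := by omega
    rw [h2, ← hrec i hile, Algebra.smul_def, Algebra.smul_def, inv_pow]
    rw [mul_left_comm, ← pow_sub₀ x hx hile]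
  rw [h1]
  have hxd : x ^ d ≠ 0 := pow_ne_zero d hx
  have : x ^ d * ∑ i ∈ Finset.range (d + 1), R.coeff i • x⁻¹ ^ i = 0 := by
    rw [key, ← h0, hroot]
  exact (mul_eq_zero.mp this).resolve_left hxd

set_option maxHeartbeats 1000000 in
private lemma circle_roots (Q : ℚ[X]) (d : ℕ) (hQm : Q.Monic) (hQd : Q.natDegree = d)
    (hd4 : 4 ≤ d) (hdeven : Even d)
    (hQrec : ∀ k ≤ d, Q.coeff k = Q.coeff (d - k))
    (hbig : (2 : ℚ) + ∑ k ∈ Finset.Icc 2 (d - 2), |Q.coeff k| < 2 * |Q.coeff (d - 1)|) :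
    ∃ S : Finset ℂ, S.card = d - 2 ∧
      ∀ z ∈ S, ‖z‖ = 1 ∧ (Q.map (algebraMap ℚ ℂ)).eval z = 0 := by
  obtain ⟨e, he⟩ := hdeven
  have he2 : 2 ≤ e := by omega
  set a : ℕ → ℝ := fun k => ((Q.coeff k : ℚ) : ℝ) with ha
  set g : ℝ → ℝ := fun θ => ∑ k ∈ Finset.range (d + 1), a k * Real.cos (((k : ℝ) - e) * θ)
    with hgdef
  have hg_cont : Continuous g := by
    apply continuous_finset_sum
    intro k _
    fun_prop
  -- the key identity
  have hF : ∀ θ : ℝ, (Q.map (algebraMap ℚ ℂ)).eval (Complex.exp (θ * Complex.I))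
      = Complex.exp ((e : ℝ) * θ * Complex.I) * ((g θ : ℝ) : ℂ) := by
    intro θ
    have hdeg' : (Q.map (algebraMap ℚ ℂ)).natDegree < d + 1 := by
      rw [hQm.natDegree_map, hQd]; omega
    rw [Polynomial.eval_eq_sum_range' hdeg']
    have hL : ∑ i ∈ Finset.range (d + 1),
        (Q.map (algebraMap ℚ ℂ)).coeff i * Complex.exp (θ * Complex.I) ^ i
        = ∑ i ∈ Finset.range (d + 1), ((Q.coeff i : ℚ) : ℂ) * Complex.exp (i * θ * Complex.I) := by
      refine Finset.sum_congr rfl fun i _ => ?_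
      rw [Polynomial.coeff_map, eq_ratCast, ← Complex.exp_nat_mul, mul_assoc]
    rw [hL]
    have hR : Complex.exp ((e : ℝ) * θ * Complex.I) * ((g θ : ℝ) : ℂ)
        = ∑ i ∈ Finset.range (d + 1), ((Q.coeff i : ℚ) : ℂ) *
            ((Complex.exp (i * θ * Complex.I) + Complex.exp ((d - i : ℕ) * θ * Complex.I)) / 2) := by
      rw [hgdef]
      push_cast
      rw [Finset.mul_sum]
      refine Finset.sum_congr rfl fun i hi => ?_
      rw [Finset.mem_range] at hi
      have hile : i ≤ d := by omega
      have hcast : ((d - i : ℕ) : ℂ) = (d : ℂ) - i := by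
        push_cast [Nat.cast_sub hile]; ring
      have hai : ((a i : ℝ) : ℂ) = ((Q.coeff i : ℚ) : ℂ) := by simp [ha]
      set c : ℂ := ((i : ℂ) - (e : ℂ)) * (θ : ℂ) with hc
      have h1 : Complex.exp ((e : ℂ) * θ * Complex.I) * Complex.exp (c * Complex.I)
          = Complex.exp ((i : ℂ) * θ * Complex.I) := by
        rw [← Complex.exp_add]; congr 1; rw [hc]; ring
      have h2 : Complex.exp ((e : ℂ) * θ * Complex.I) * Complex.exp (-c * Complex.I)
          = Complex.exp (((d - i : ℕ) : ℂ) * θ * Complex.I) := by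
        rw [← Complex.exp_add]; congr 1
        rw [hc, hcast]
        have hdc : (d : ℂ) = (e : ℂ) + (e : ℂ) := by push_cast [he]; ring
        rw [hdc]; ring
      have hcosc : Complex.cos c = (Complex.exp (c * Complex.I)
          + Complex.exp (-c * Complex.I)) / 2 := by
        linear_combination (Complex.two_cos c) / 2
      rw [hai]
      linear_combination (((Q.coeff i : ℚ) : ℂ) * Complex.exp ((e : ℂ) * θ * Complex.I)) * hcosc
        + (((Q.coeff i : ℚ) : ℂ) / 2) * h1 + (((Q.coeff i : ℚ) : ℂ) / 2) * h2
    rw [hR]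
    have hsplit : ∑ i ∈ Finset.range (d + 1), ((Q.coeff i : ℚ) : ℂ) *
        Complex.exp ((d - i : ℕ) * θ * Complex.I)
        = ∑ i ∈ Finset.range (d + 1), ((Q.coeff i : ℚ) : ℂ) *
            Complex.exp (i * θ * Complex.I) := by
      rw [← Finset.sum_range_reflect
        (fun i => ((Q.coeff i : ℚ) : ℂ) * Complex.exp (i * θ * Complex.I)) (d + 1)]
      refine Finset.sum_congr rfl fun i hi => ?_
      rw [Finset.mem_range] at hi
      have hile : i ≤ d := by omega
      have h2 : d + 1 - 1 - i = d - i := by omega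
      rw [h2, ← hQrec i hile]
    have hexp : ∑ i ∈ Finset.range (d + 1), ((Q.coeff i : ℚ) : ℂ) *
        ((Complex.exp (i * θ * Complex.I) + Complex.exp ((d - i : ℕ) * θ * Complex.I)) / 2)
        = (∑ i ∈ Finset.range (d + 1), ((Q.coeff i : ℚ) : ℂ) * Complex.exp (i * θ * Complex.I)
          + ∑ i ∈ Finset.range (d + 1), ((Q.coeff i : ℚ) : ℂ) *
            Complex.exp ((d - i : ℕ) * θ * Complex.I)) / 2 := by
      calc ∑ i ∈ Finset.range (d + 1), ((Q.coeff i : ℚ) : ℂ) *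
          ((Complex.exp (i * θ * Complex.I) + Complex.exp ((d - i : ℕ) * θ * Complex.I)) / 2)
          = ∑ i ∈ Finset.range (d + 1), (((Q.coeff i : ℚ) : ℂ) * Complex.exp (i * θ * Complex.I)
            + ((Q.coeff i : ℚ) : ℂ) * Complex.exp ((d - i : ℕ) * θ * Complex.I)) / 2 :=
          Finset.sum_congr rfl fun i _ => by ring
        _ = _ := by rw [← Finset.sum_div, Finset.sum_add_distrib]
    rw [hexp, hsplit]
    ring
  -- basic coefficient facts
  have he1 : (0:ℝ) < (e:ℝ) - 1 := by
    have : (2:ℝ) ≤ (e:ℝ) := by exact_mod_cast he2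
    linarith
  have hQd1 : Q.coeff d = 1 := by
    have := hQm.coeff_natDegree; rwa [hQd] at this
  have ha0 : a 0 = 1 := by
    have h1 : Q.coeff 0 = Q.coeff d := by simpa using hQrec 0 (by omega)
    simp [ha, h1, hQd1]
  have had : a d = 1 := by simp [ha, hQd1]
  have ha1 : a 1 = a (d - 1) := by
    have h1 := hQrec 1 (by omega)
    simp [ha, h1]
  have hsplitg : ∀ θ : ℝ, g θ = 2 * Real.cos ((e:ℝ) * θ)
      + 2 * a (d-1) * Real.cos (((e:ℝ) - 1) * θ)
      + ∑ k ∈ Finset.Icc 2 (d-2), a k * Real.cos (((k:ℝ) - e) * θ) := by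
    intro θ
    have hins : Finset.range (d+1)
        = insert 0 (insert 1 (insert (d-1) (insert d (Finset.Icc 2 (d-2))))) := by
      ext k
      simp only [Finset.mem_range, Finset.mem_insert, Finset.mem_Icc]
      omega
    rw [hgdef]
    simp only
    rw [hins,
        Finset.sum_insert (by simp only [Finset.mem_insert, Finset.mem_Icc]; omega),
        Finset.sum_insert (by simp only [Finset.mem_insert, Finset.mem_Icc]; omega),
        Finset.sum_insert (by simp only [Finset.mem_insert, Finset.mem_Icc]; omega),
        Finset.sum_insert (by simp only [Finset.mem_Icc]; omega)]
    rw [ha0, had, ha1]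
    have c0 : (((0:ℕ):ℝ) - (e:ℝ)) * θ = -((e:ℝ) * θ) := by push_cast; ring
    have c1 : (((1:ℕ):ℝ) - (e:ℝ)) * θ = -((((e:ℝ) - 1)) * θ) := by push_cast; ring
    have hdR : ((d:ℕ):ℝ) = 2*(e:ℝ) := by rw [he]; push_cast; ring
    have cd1 : (((d-1:ℕ):ℝ) - (e:ℝ)) * θ = (((e:ℝ) - 1)) * θ := by
      have h1 : ((d-1:ℕ):ℝ) = ((d:ℕ):ℝ) - 1 := by
        push_cast [Nat.cast_sub (by omega : 1 ≤ d)]; ring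
      rw [h1, hdR]; ring
    have cd : (((d:ℕ):ℝ) - (e:ℝ)) * θ = (e:ℝ) * θ := by rw [hdR]; ring
    rw [c0, c1, cd1, cd, Real.cos_neg, Real.cos_neg]
    ring
  set s : ℝ := a (d-1) with hs
  set T : ℝ := ∑ k ∈ Finset.Icc 2 (d-2), |a k| with hT
  have hTnn : (0:ℝ) ≤ T := Finset.sum_nonneg fun k _ => abs_nonneg _
  have hbigR : 2 + T < 2 * |s| := by
    rw [hT, hs, ha]
    push_cast
    exact_mod_cast hbig
  have hs1 : 1 < |s| := by linarith
  have hs0 : s ≠ 0 := by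
    intro h; rw [h, abs_zero] at hs1; linarith
  have hM : ∀ θ : ℝ, |∑ k ∈ Finset.Icc 2 (d-2), a k * Real.cos (((k:ℝ) - e) * θ)| ≤ T := by
    intro θ
    refine (Finset.abs_sum_le_sum_abs _ _).trans ?_
    rw [hT]
    refine Finset.sum_le_sum fun k _ => ?_
    rw [abs_mul]
    exact mul_le_of_le_one_right (abs_nonneg _) (Real.abs_cos_le_one _)
  set θf : ℕ → ℝ := fun j => (j:ℝ) * Real.pi / ((e:ℝ) - 1) with hθf
  have hπ := Real.pi_pos
  have hθlt : ∀ {j j' : ℕ}, j < j' → θf j < θf j' := by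
    intro j j' h
    rw [hθf]
    simp only
    have hjj : (j:ℝ) < (j':ℝ) := by exact_mod_cast h
    apply div_lt_div_of_pos_right ?_ he1
    nlinarith
  have hθle : ∀ {j j' : ℕ}, j ≤ j' → θf j ≤ θf j' := by
    intro j j' h
    rcases eq_or_lt_of_le h with rfl | h
    · exact le_refl _
    · exact le_of_lt (hθlt h)
  have hθ0 : θf 0 = 0 := by simp [hθf]
  have hθnn : ∀ j : ℕ, 0 ≤ θf j := fun j => hθ0 ▸ hθle (Nat.zero_le j)
  have hθtop : θf (d-2) = 2 * Real.pi := by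
    rw [hθf]
    simp only
    have hcast : ((d-2:ℕ):ℝ) = 2*((e:ℝ)-1) := by
      have h1 : ((d-2:ℕ):ℝ) = ((d:ℕ):ℝ) - 2 := by
        push_cast [Nat.cast_sub (by omega : 2 ≤ d)]; ring
      have hdR : ((d:ℕ):ℝ) = 2*(e:ℝ) := by rw [he]; push_cast; ring
      rw [h1, hdR]; ring
    rw [hcast]
    field_simp
  have hcosθ : ∀ j : ℕ, Real.cos (((e:ℝ) - 1) * θf j) = (-1:ℝ)^j := by
    intro j
    have harg : ((e:ℝ) - 1) * θf j = (j:ℝ) * Real.pi := by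
      rw [hθf]; field_simp
    rw [harg]
    simpa using Real.cos_nat_mul_pi_sub 0 j
  have hsign : ∀ j : ℕ, j ≤ d - 2 → 0 < (-1:ℝ)^j * (s * g (θf j)) := by
    intro j hj
    have hg := hsplitg (θf j)
    rw [hcosθ j] at hg
    set M := ∑ k ∈ Finset.Icc 2 (d-2), a k * Real.cos (((k:ℝ) - e) * θf j) with hMdef
    have hMb := hM (θf j)
    rw [← hMdef] at hMb
    obtain ⟨hMb1, hMb2⟩ := abs_le.mp hMb
    set C := Real.cos ((e:ℝ) * θf j) with hC
    have hC1 : -1 ≤ C := Real.neg_one_le_cos _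
    have hC2 : C ≤ 1 := Real.cos_le_one _
    have hsC : |s * C| ≤ |s| := by
      rw [abs_mul, hC]
      exact mul_le_of_le_one_right (abs_nonneg _) (Real.abs_cos_le_one _)
    obtain ⟨hsC1, hsC2⟩ := abs_le.mp hsC
    have hsM : |s * M| ≤ |s| * T := by
      rw [abs_mul]
      exact mul_le_mul_of_nonneg_left hMb (abs_nonneg s)
    obtain ⟨hsM1, hsM2⟩ := abs_le.mp hsM
    have hkey : |s| * (2 + T) < |s| * (2 * |s|) :=
      mul_lt_mul_of_pos_left hbigR (by linarith)
    have hsq : s * s = |s| * |s| := by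
      rw [← abs_mul_abs_self]
    rcases Nat.even_or_odd j with hev | hod
    · rw [Even.neg_one_pow hev] at hg ⊢
      rw [mul_one] at hg
      rw [one_mul, hg]
      nlinarith
    · rw [Odd.neg_one_pow hod] at hg ⊢
      rw [hg]
      nlinarith
  have hzero : ∀ j : ℕ, j < d - 2 → ∃ c ∈ Set.Ioo (θf j) (θf (j+1)), g c = 0 := by
    intro j hj
    have h1 := hsign j (by omega)
    have h2 := hsign (j+1) (by omega)
    have hab : θf j ≤ θf (j+1) := le_of_lt (hθlt (Nat.lt_succ_self j))
    have hcont : ContinuousOn (fun θ => s * g θ) (Set.Icc (θf j) (θf (j+1))) :=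
      (continuous_const.mul hg_cont).continuousOn
    rcases Nat.even_or_odd j with hev | hod
    · rw [Even.neg_one_pow hev, one_mul] at h1
      rw [Odd.neg_one_pow (Even.add_one hev)] at h2
      have h2' : s * g (θf (j+1)) < 0 := by linarith
      obtain ⟨c, hc, hfc⟩ := intermediate_value_Ioo' hab hcont
        (⟨h2', h1⟩ : (0:ℝ) ∈ Set.Ioo (s * g (θf (j+1))) (s * g (θf j)))
      refine ⟨c, hc, ?_⟩
      rcases mul_eq_zero.mp hfc with h | h
      · exact absurd h hs0
      · exact h
    · rw [Odd.neg_one_pow hod] at h1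
      rw [Even.neg_one_pow (Odd.add_one hod), one_mul] at h2
      have h1' : s * g (θf j) < 0 := by linarith
      obtain ⟨c, hc, hfc⟩ := intermediate_value_Ioo hab hcont
        (⟨h1', h2⟩ : (0:ℝ) ∈ Set.Ioo (s * g (θf j)) (s * g (θf (j+1))))
      refine ⟨c, hc, ?_⟩
      rcases mul_eq_zero.mp hfc with h | h
      · exact absurd h hs0
      · exact h
  have hzero' : ∀ j : Fin (d-2), ∃ c, c ∈ Set.Ioo (θf j.1) (θf (j.1+1)) ∧ g c = 0 := by
    intro j
    obtain ⟨c, hc1, hc2⟩ := hzero j.1 j.2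
    exact ⟨c, hc1, hc2⟩
  choose cc hcc1 hcc2 using hzero'
  have hccmem : ∀ j : Fin (d-2), 0 < cc j ∧ cc j < 2*Real.pi := by
    intro j
    obtain ⟨h1, h2⟩ := hcc1 j
    constructor
    · exact lt_of_le_of_lt (hθnn j.1) h1
    · have hle : θf (j.1+1) ≤ θf (d-2) := hθle (by omega)
      rw [hθtop] at hle
      linarith
  have hccmono : ∀ j j' : Fin (d-2), j.1 < j'.1 → cc j < cc j' := by
    intro j j' h
    have h1 := (hcc1 j).2
    have h2 := (hcc1 j').1
    have h3 : θf (j.1+1) ≤ θf j'.1 := hθle (by omega)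
    linarith
  have hexpinj : ∀ x y : ℝ, 0 < x → x < 2*Real.pi → 0 < y → y < 2*Real.pi →
      Complex.exp ((x:ℂ) * Complex.I) = Complex.exp ((y:ℂ) * Complex.I) → x = y := by
    intro x y hx1 hx2 hy1 hy2 hxy
    obtain ⟨m, hm⟩ := Complex.exp_eq_exp_iff_exists_int.mp hxy
    have him : x = y + (m:ℝ) * (2*Real.pi) := by
      have := congrArg Complex.im hm
      simpa using this
    have hm0 : m = 0 := by
      by_contra hm0
      rcases lt_or_gt_of_ne hm0 with h | h
      · have hle : (m:ℝ) ≤ -1 := by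
          have : m ≤ -1 := by omega
          exact_mod_cast this
        nlinarith
      · have hle : (1:ℝ) ≤ (m:ℝ) := by exact_mod_cast h
        nlinarith
    rw [hm0] at him
    push_cast at him
    linarith
  refine ⟨Finset.image (fun j : Fin (d-2) => Complex.exp ((cc j : ℂ) * Complex.I))
    Finset.univ, ?_, ?_⟩
  · rw [Finset.card_image_of_injOn, Finset.card_univ, Fintype.card_fin]
    intro j _ j' _ hjj'
    have hcceq : cc j = cc j' := by
      refine hexpinj _ _ (hccmem j).1 (hccmem j).2 (hccmem j').1 (hccmem j').2 hjj'
    rcases lt_trichotomy j.1 j'.1 with h | h | h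
    · exact absurd hcceq (ne_of_lt (hccmono j j' h))
    · exact Fin.ext h
    · exact absurd hcceq.symm (ne_of_lt (hccmono j' j h))
  · intro z hz
    simp only [Finset.mem_image, Finset.mem_univ, true_and] at hz
    obtain ⟨j, rfl⟩ := hz
    constructor
    · exact Complex.norm_exp_ofReal_mul_I _
    · rw [hF (cc j), hcc2 j]
      simp


set_option maxHeartbeats 1000000 in
/-- Theorem 1 (sufficiency): let `τ > 1` be a real algebraic integer whose minimal
polynomial `P` over `ℚ` is reciprocal of even degree `d ≥ 4`.  If there is `n ≥ 2` such
that the minimal polynomial `P_n` of `τ ^ n` is monic reciprocal of degree `d` with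
integer coefficients and `|a_{d-1,n}| > (1/2) (d/(d-2)) (2 + ∑_{k=2}^{d-2} |a_{k,n}|)`,
then `τ` is a Salem number: `τ⁻¹` is a root of `P` and all complex roots of `P` other
than `τ` and `τ⁻¹` lie on the unit circle. -/
theorem condition_implies_salem
    (τ : ℝ) (hτ : 1 < τ) (hint : IsIntegral ℤ τ)
    (d : ℕ) (hd : d = (minpoly ℚ τ).natDegree) (hd4 : 4 ≤ d) (hdeven : Even d)
    (hrec : ∀ k : ℕ, k ≤ d → (minpoly ℚ τ).coeff k = (minpoly ℚ τ).coeff (d - k))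
    (hex : ∃ n : ℕ, 2 ≤ n ∧
      (minpoly ℚ (τ ^ n)).Monic ∧
      (minpoly ℚ (τ ^ n)).natDegree = d ∧
      (∀ k : ℕ, ∃ m : ℤ, (minpoly ℚ (τ ^ n)).coeff k = (m : ℚ)) ∧
      (∀ k : ℕ, k ≤ d → (minpoly ℚ (τ ^ n)).coeff k = (minpoly ℚ (τ ^ n)).coeff (d - k)) ∧
      |(minpoly ℚ (τ ^ n)).coeff (d - 1)| >
        (1 / 2) * ((d : ℚ) / ((d : ℚ) - 2)) *
          (2 + ∑ k ∈ Finset.Icc 2 (d - 2), |(minpoly ℚ (τ ^ n)).coeff k|)) :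
    (Polynomial.aeval τ⁻¹) (minpoly ℚ τ) = 0 ∧
      ∀ z ∈ ((minpoly ℚ τ).map (algebraMap ℚ ℂ)).roots,
        z ≠ (τ : ℂ) → z ≠ ((τ : ℂ))⁻¹ → ‖z‖ = 1 := by
  classical
  set P := minpoly ℚ τ with hP
  have hQτ : IsIntegral ℚ τ := hint.tower_top
  have hPmonic : P.Monic := minpoly.monic hQτ
  have hτ0 : τ ≠ 0 := by intro h; rw [h] at hτ; linarith
  have h1 : (Polynomial.aeval τ⁻¹) P = 0 :=
    recip_aeval_inv P d hd.symm hrec τ hτ0 (minpoly.aeval ℚ τ)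
  refine ⟨h1, ?_⟩
  obtain ⟨n, hn2, hQm, hQdeg, _hintQ, hQrec, hQbig⟩ := hex
  set Q := minpoly ℚ (τ ^ n) with hQ
  have hbig' : (2:ℚ) + ∑ k ∈ Finset.Icc 2 (d-2), |Q.coeff k| < 2 * |Q.coeff (d-1)| := by
    have hd2 : (0:ℚ) < (d:ℚ) - 2 := by
      have : (4:ℚ) ≤ (d:ℚ) := by exact_mod_cast hd4
      linarith
    have hT : (0:ℚ) ≤ ∑ k ∈ Finset.Icc 2 (d-2), |Q.coeff k| :=
      Finset.sum_nonneg fun k _ => abs_nonneg _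
    have hfrac : 1 ≤ (d:ℚ)/((d:ℚ)-2) := by
      rw [le_div_iff₀ hd2]
      have : (4:ℚ) ≤ (d:ℚ) := by exact_mod_cast hd4
      linarith
    nlinarith [hQbig]
  obtain ⟨S, hScard, hSprop⟩ := circle_roots Q d hQm hQdeg hd4 hdeven hQrec hbig'
  set Pc := P.map (algebraMap ℚ ℂ) with hPc
  set Qc := Q.map (algebraMap ℚ ℂ) with hQc
  have hPc0 : Pc ≠ 0 := (hPmonic.map _).ne_zero
  have hQc0 : Qc ≠ 0 := (hQm.map _).ne_zero
  set τ' : ℂ := (τ:ℂ) with hτ'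
  have hτ'alg : (algebraMap ℝ ℂ) τ = τ' := rfl
  have hτ'0 : τ' ≠ 0 := Complex.ofReal_ne_zero.mpr hτ0
  have hτn1 : (1:ℝ) < τ ^ n := one_lt_pow₀ hτ (by omega)
  have hQceval : ∀ w : ℂ, Qc.eval w = (Polynomial.aeval w) Q := fun w => by
    rw [hQc, Polynomial.eval_map, Polynomial.aeval_def]
  have hPceval : ∀ w : ℂ, Pc.eval w = (Polynomial.aeval w) P := fun w => by
    rw [hPc, Polynomial.eval_map, Polynomial.aeval_def]
  have haQτn : (Polynomial.aeval (τ' ^ n)) Q = 0 := by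
    have h0 : (Polynomial.aeval (τ ^ n)) Q = 0 := minpoly.aeval ℚ (τ^n)
    have h2 : (Polynomial.aeval ((algebraMap ℝ ℂ) (τ^n))) Q
        = (algebraMap ℝ ℂ) ((Polynomial.aeval (τ^n)) Q) :=
      Polynomial.aeval_algebraMap_apply ℂ (τ^n) Q
    rw [h0, map_zero, map_pow, hτ'alg] at h2
    exact h2
  have hT1root : Qc.eval (τ'^n) = 0 := by rw [hQceval]; exact haQτn
  have hT2root : Qc.eval ((τ'^n)⁻¹) = 0 := by
    rw [hQceval]
    exact recip_aeval_inv Q d hQdeg hQrec (τ'^n) (pow_ne_zero n hτ'0) haQτn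
  have habsτn : ‖τ'^n‖ = τ^n := by
    rw [norm_pow, hτ', Complex.norm_real, Real.norm_of_nonneg (by linarith)]
  have habs1 : ‖τ'^n‖ ≠ 1 := by rw [habsτn]; exact ne_of_gt hτn1
  have habs2 : ‖(τ'^n)⁻¹‖ ≠ 1 := by
    rw [norm_inv, habsτn]
    intro hcon
    rw [inv_eq_one] at hcon
    linarith
  have hT1T2 : (τ'^n) ≠ (τ'^n)⁻¹ := by
    intro h
    have h2 : ‖τ'^n‖ = ‖(τ'^n)⁻¹‖ := by rw [← h]
    rw [habsτn, norm_inv, habsτn] at h2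
    have h5 : (0:ℝ) < τ^n := by positivity
    have h4 : τ^n * τ^n = 1 := by
      calc τ^n * τ^n = τ^n * (τ^n)⁻¹ := by rw [← h2]
        _ = 1 := mul_inv_cancel₀ (ne_of_gt h5)
    nlinarith
  have hQcdeg : Qc.natDegree = d := by rw [hQc, hQm.natDegree_map, hQdeg]
  have hQcroots : Qc.roots.card = d := by
    rw [← hQcdeg]
    exact Polynomial.splits_iff_card_roots.mp (IsAlgClosed.splits Qc)
  have hoff : ∀ w : ℂ, Qc.eval w = 0 → ‖w‖ ≠ 1 → w = τ'^n ∨ w = (τ'^n)⁻¹ := by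
    intro w hw habsw
    by_contra hcon
    push_neg at hcon
    obtain ⟨hw1, hw2⟩ := hcon
    have h3 : (τ'^n)⁻¹ ∉ S := fun h => habs2 (hSprop _ h).1
    have h2 : τ'^n ∉ insert (τ'^n)⁻¹ S := by
      simp only [Finset.mem_insert]
      push_neg
      exact ⟨hT1T2, fun h => habs1 (hSprop _ h).1⟩
    have h1w : w ∉ insert (τ'^n) (insert (τ'^n)⁻¹ S) := by
      simp only [Finset.mem_insert]
      push_neg
      exact ⟨hw1, hw2, fun h => habsw (hSprop _ h).1⟩
    have hF0sub : insert w (insert (τ'^n) (insert (τ'^n)⁻¹ S)) ⊆ Qc.roots.toFinset := by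
      intro z hz
      simp only [Finset.mem_insert] at hz
      rcases hz with rfl | rfl | rfl | hz
      · exact Multiset.mem_toFinset.mpr (Polynomial.mem_roots'.mpr ⟨hQc0, hw⟩)
      · exact Multiset.mem_toFinset.mpr (Polynomial.mem_roots'.mpr ⟨hQc0, hT1root⟩)
      · exact Multiset.mem_toFinset.mpr (Polynomial.mem_roots'.mpr ⟨hQc0, hT2root⟩)
      · exact Multiset.mem_toFinset.mpr (Polynomial.mem_roots'.mpr ⟨hQc0, (hSprop _ hz).2⟩)
    have hcard : (insert w (insert (τ'^n) (insert (τ'^n)⁻¹ S))).card = d + 1 := by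
      rw [Finset.card_insert_of_notMem h1w, Finset.card_insert_of_notMem h2,
        Finset.card_insert_of_notMem h3, hScard]
      omega
    have hle := Finset.card_le_card hF0sub
    have hle2 := Multiset.toFinset_card_le Qc.roots
    rw [hcard] at hle
    omega
  have hPirr : Irreducible P := minpoly.irreducible hQτ
  have hPsep : P.Separable := hPirr.separable
  have hQirr : Irreducible Q := minpoly.irreducible (hQτ.pow n)
  have hQsep : Q.Separable := hQirr.separable
  have hPcnodup : Pc.roots.Nodup := Polynomial.nodup_roots (hPsep.map)
  have hQcnodup : Qc.roots.Nodup := Polynomial.nodup_roots (hQsep.map)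
  have hPcdeg : Pc.natDegree = d := by rw [hPc, hPmonic.natDegree_map, ← hd]
  have hPcroots : Pc.roots.card = d := by
    rw [← hPcdeg]
    exact Polynomial.splits_iff_card_roots.mp (IsAlgClosed.splits Pc)
  set A := Pc.roots.toFinset with hA
  set B := Qc.roots.toFinset with hB
  have hAcard : A.card = d := by
    rw [hA, Multiset.toFinset_card_of_nodup hPcnodup, hPcroots]
  have hBcard : B.card = d := by
    rw [hB, Multiset.toFinset_card_of_nodup hQcnodup, hQcroots]
  have hdvd : P ∣ Q.comp (Polynomial.X ^ n) := by
    apply minpoly.dvd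
    rw [Polynomial.aeval_comp]
    simp only [map_pow, Polynomial.aeval_X]
    exact minpoly.aeval ℚ (τ^n)
  have hdvdc : Pc ∣ Qc.comp (Polynomial.X ^ n) := by
    have h5 := Polynomial.map_dvd (algebraMap ℚ ℂ) hdvd
    rwa [Polynomial.map_comp, Polynomial.map_pow, Polynomial.map_X] at h5
  have hmapsto : ∀ z : ℂ, Pc.eval z = 0 → Qc.eval (z^n) = 0 := by
    intro z hz
    obtain ⟨R, hR⟩ := hdvdc
    have h6 : (Qc.comp (Polynomial.X ^ n)).eval z = 0 := by
      rw [hR, Polynomial.eval_mul, hz, zero_mul]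
    rwa [Polynomial.eval_comp, Polynomial.eval_pow, Polynomial.eval_X] at h6
  have hτ'int : IsIntegral ℚ τ' := IsIntegral.map (IsScalarTower.toAlgHom ℚ ℝ ℂ) hQτ
  have hminQ : minpoly ℚ (τ'^n) = Q := by
    have h7 : (algebraMap ℝ ℂ) (τ^n) = τ'^n := by rw [map_pow, hτ'alg]
    rw [← h7, minpoly.algebraMap_eq (algebraMap ℝ ℂ).injective]
  have hsurj : ∀ w ∈ B, ∃ z ∈ A, z^n = w := by
    intro w hwB
    have hw : Qc.eval w = 0 := (Polynomial.mem_roots'.mp (Multiset.mem_toFinset.mp hwB)).2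
    have hy : (Polynomial.aeval w) (minpoly ℚ (τ'^n)) = 0 := by
      rw [hminQ, ← hQceval]; exact hw
    have hτ'mem : τ' ∈ ({τ'} : Set ℂ) := rfl
    have hK : ∀ s ∈ ({τ'} : Set ℂ),
        IsIntegral ℚ s ∧ ((minpoly ℚ s).map (algebraMap ℚ ℂ)).Splits := by
      intro s hs
      rw [Set.mem_singleton_iff] at hs
      subst hs
      exact ⟨hτ'int, IsAlgClosed.splits _⟩
    have hx : τ'^n ∈ IntermediateField.adjoin ℚ ({τ'} : Set ℂ) :=
      pow_mem (IntermediateField.subset_adjoin ℚ _ hτ'mem) n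
    obtain ⟨φ, hφ⟩ := IntermediateField.exists_algHom_adjoin_of_splits_of_aeval hK hx hy
    set t : IntermediateField.adjoin ℚ ({τ'} : Set ℂ) :=
      ⟨τ', IntermediateField.subset_adjoin ℚ _ hτ'mem⟩ with ht
    have htn : t ^ n = ⟨τ'^n, hx⟩ := by
      apply Subtype.ext
      push_cast [ht]
      rfl
    have hzw : (φ t)^n = w := by rw [← map_pow, htn, hφ]
    have hminT : minpoly ℚ t = P := by
      have h8 : (algebraMap (IntermediateField.adjoin ℚ ({τ'} : Set ℂ)) ℂ) t = τ' := rfl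
      have h9 := minpoly.algebraMap_eq (A := ℚ)
        (algebraMap (IntermediateField.adjoin ℚ ({τ'} : Set ℂ)) ℂ).injective t
      rw [h8] at h9
      rw [← h9, ← hτ'alg, minpoly.algebraMap_eq (algebraMap ℝ ℂ).injective]
    have hroot : Pc.eval (φ t) = 0 := by
      rw [hPceval, Polynomial.aeval_algHom_apply φ t P, ← hminT, minpoly.aeval, map_zero]
    exact ⟨φ t, Multiset.mem_toFinset.mpr (Polynomial.mem_roots'.mpr ⟨hPc0, hroot⟩), hzw⟩
  have hmem : ∀ z ∈ A, z^n ∈ B := fun z hz =>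
    Multiset.mem_toFinset.mpr (Polynomial.mem_roots'.mpr ⟨hQc0,
      hmapsto z (Polynomial.mem_roots'.mp (Multiset.mem_toFinset.mp hz)).2⟩)
  let f : {x // x ∈ A} → {x // x ∈ B} := fun x => ⟨x.1 ^ n, hmem x.1 x.2⟩
  have hfsurj : Function.Surjective f := by
    intro w
    obtain ⟨z, hzA, hzn⟩ := hsurj w.1 w.2
    exact ⟨⟨z, hzA⟩, Subtype.ext hzn⟩
  have hfinj : Function.Injective f := by
    have hcard : Fintype.card {x // x ∈ A} = Fintype.card {x // x ∈ B} := by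
      rw [Fintype.card_coe, Fintype.card_coe, hAcard, hBcard]
    exact ((Fintype.bijective_iff_surjective_and_card f).mpr ⟨hfsurj, hcard⟩).1
  intro z hzroots hz1 hz2
  have hzA : z ∈ A := Multiset.mem_toFinset.mpr hzroots
  by_contra habsz
  have hzeval : Pc.eval z = 0 := (Polynomial.mem_roots'.mp hzroots).2
  have hzn : Qc.eval (z^n) = 0 := hmapsto z hzeval
  have habszn : ‖z^n‖ ≠ 1 := by
    rw [norm_pow]
    intro hone
    apply habsz
    have h0 : (0:ℝ) ≤ ‖z‖ := norm_nonneg _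
    rcases lt_trichotomy (‖z‖) 1 with h | h | h
    · have := pow_lt_one₀ h0 h (by omega : n ≠ 0)
      linarith
    · exact h
    · have := one_lt_pow₀ h (by omega : n ≠ 0)
      linarith
  have hτ'root : Pc.eval τ' = 0 := by
    rw [hPceval]
    have h2 : (Polynomial.aeval ((algebraMap ℝ ℂ) τ)) P
        = (algebraMap ℝ ℂ) ((Polynomial.aeval τ) P) :=
      Polynomial.aeval_algebraMap_apply ℂ τ P
    rw [minpoly.aeval, map_zero, hτ'alg] at h2
    exact h2
  have hτ'invroot : Pc.eval τ'⁻¹ = 0 := by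
    rw [hPceval]
    have h2 : (Polynomial.aeval ((algebraMap ℝ ℂ) τ⁻¹)) P
        = (algebraMap ℝ ℂ) ((Polynomial.aeval τ⁻¹) P) :=
      Polynomial.aeval_algebraMap_apply ℂ τ⁻¹ P
    rw [h1, map_zero] at h2
    rw [show (algebraMap ℝ ℂ) τ⁻¹ = τ'⁻¹ by rw [map_inv₀, hτ'alg]] at h2
    exact h2
  have hτ'A : τ' ∈ A := Multiset.mem_toFinset.mpr (Polynomial.mem_roots'.mpr ⟨hPc0, hτ'root⟩)
  have hτ'invA : τ'⁻¹ ∈ A :=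
    Multiset.mem_toFinset.mpr (Polynomial.mem_roots'.mpr ⟨hPc0, hτ'invroot⟩)
  rcases hoff (z^n) hzn habszn with h | h
  · have heq : f ⟨z, hzA⟩ = f ⟨τ', hτ'A⟩ := Subtype.ext (by simpa [f] using h)
    exact hz1 (congrArg Subtype.val (hfinj heq))
  · have heq : f ⟨z, hzA⟩ = f ⟨τ'⁻¹, hτ'invA⟩ := Subtype.ext (by simp [f, inv_pow]; exact h)
    exact hz2 (congrArg Subtype.val (hfinj heq))
end

section
/- Let τ > 1 be a Salem number of degree d and, for n ∈ ℕ, let a_{d-1,n} denote the coefficient of x^{d-1} in the minimal polynomial P_n(x) of τⁿ over ℚ. Then a_{d-1,n} is nonzero for all sufficiently large n, and the ratio a_{d-1,n+1}/a_{d-1,n} tends to τ as n → ∞. -/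
/-- A Salem number: a real algebraic integer `τ > 1` of degree at least 4 over `ℚ`,
conjugate to `τ⁻¹`, all of whose complex conjugates other than `τ` and `τ⁻¹` are
of absolute value 1. -/
def IsSalem (τ : ℝ) : Prop :=
  1 < τ ∧ IsIntegral ℤ τ ∧ 4 ≤ (minpoly ℚ τ).natDegree ∧
    (Polynomial.aeval τ⁻¹) (minpoly ℚ τ) = 0 ∧
    ∀ z ∈ ((minpoly ℚ τ).map (algebraMap ℚ ℂ)).roots,
      z ≠ (τ : ℂ) → z ≠ ((τ : ℂ))⁻¹ → ‖z‖ = 1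


open Polynomial IntermediateField

lemma salem_int {τ : ℝ} (hτ : IsSalem τ) : IsIntegral ℚ τ :=
  hτ.2.1.tower_top

lemma salem_adjoin_pow_eq {τ : ℝ} (hτ : IsSalem τ) {n : ℕ} (hn : 1 ≤ n) :
    ℚ⟮(τ ^ n : ℝ)⟯ = ℚ⟮τ⟯ := by
  have hτ1 : (1 : ℝ) < τ := hτ.1
  have hτ0 : (0 : ℝ) < τ := lt_trans one_pos hτ1
  have hint : IsIntegral ℚ τ := salem_int hτ
  refine le_antisymm (adjoin_simple_le_iff.mpr (pow_mem (mem_adjoin_simple_self ℚ τ) n)) ?_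
  rw [adjoin_simple_le_iff]
  set F := ℚ⟮(τ ^ n : ℝ)⟯
  have hintF : IsIntegral F τ := hint.tower_top
  set g := minpoly F τ with hg
  set φ : F →+* ℂ := (algebraMap ℝ ℂ).comp (algebraMap F ℝ) with hφ
  set G := g.map φ with hG
  -- the element τ^n as an element of F
  set t : F := ⟨τ ^ n, mem_adjoin_simple_self ℚ (τ ^ n)⟩ with ht
  have hdvd1 : g ∣ (X ^ n - C t) := by
    apply minpoly.dvd
    simp [ht, Algebra.algebraMap_ofSubsemiring_apply]
  have hφt : φ t = (τ : ℂ) ^ n := by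
    simp [hφ, ht]
  have hdvd1' : G ∣ (X ^ n - C ((τ : ℂ) ^ n)) := by
    have := Polynomial.map_dvd φ hdvd1
    rw [Polynomial.map_sub, Polynomial.map_pow, map_X, map_C, hφt] at this
    exact this
  have hdvd2 : g ∣ (minpoly ℚ τ).map (algebraMap ℚ F) := by
    apply minpoly.dvd
    rw [aeval_map_algebraMap]
    exact minpoly.aeval ℚ τ
  have hdvd2' : G ∣ (minpoly ℚ τ).map (algebraMap ℚ ℂ) := by
    have := Polynomial.map_dvd φ hdvd2
    rwa [Polynomial.map_map, (by ext q : 1 <;> simp : φ.comp (algebraMap ℚ F) = algebraMap ℚ ℂ)] at this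
  have hGmonic : G.Monic := (minpoly.monic hintF).map φ
  have hGne : G ≠ 0 := hGmonic.ne_zero
  have hroots : ∀ z ∈ G.roots, z = (τ : ℂ) := by
    intro z hz
    have hzroot : G.IsRoot z := (mem_roots'.mp hz).2
    have hz1 : z ^ n = (τ : ℂ) ^ n := by
      have h2 := Polynomial.eval_eq_zero_of_dvd_of_eval_eq_zero hdvd1' hzroot
      simpa [sub_eq_zero] using h2
    have habs : ‖z‖ = τ := by
      have hpow : ‖z‖ ^ n = τ ^ n := by
        rw [← norm_pow, hz1, norm_pow, Complex.norm_real, Real.norm_eq_abs, abs_of_pos hτ0]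
      rcases lt_trichotomy ‖z‖ τ with h | h | h
      · exfalso
        have := pow_lt_pow_left₀ h (norm_nonneg z) (Nat.one_le_iff_ne_zero.mp hn)
        rw [hpow] at this; exact lt_irrefl _ this
      · exact h
      · exfalso
        have := pow_lt_pow_left₀ h (le_of_lt hτ0) (Nat.one_le_iff_ne_zero.mp hn)
        rw [hpow] at this; exact lt_irrefl _ this
    by_contra hne
    have hzp : z ∈ ((minpoly ℚ τ).map (algebraMap ℚ ℂ)).roots := by
      rw [mem_roots']
      constructor
      · exact fun h0 => (minpoly.ne_zero hint) (by
          simpa using (Polynomial.map_eq_zero_iff (algebraMap ℚ ℂ).injective).mp h0)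
      · exact Polynomial.eval_eq_zero_of_dvd_of_eval_eq_zero hdvd2' hzroot
    have hne2 : z ≠ ((τ : ℂ))⁻¹ := by
      intro h
      rw [h] at habs
      rw [norm_inv, Complex.norm_real, Real.norm_eq_abs, abs_of_pos hτ0] at habs
      have : τ⁻¹ < 1 := inv_lt_one_of_one_lt₀ hτ1
      linarith
    have := hτ.2.2.2.2 z hzp hne hne2
    rw [habs] at this
    linarith
  -- G has all roots equal to τ, is separable, so degree 1
  have hsep : g.Separable := (minpoly.irreducible hintF).separable
  have hGsep : G.Separable := hsep.map
  have hnodup : G.roots.Nodup := Polynomial.nodup_roots hGsep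
  have hsplits : G.Splits := IsAlgClosed.splits G
  have hcard : G.roots.card = G.natDegree := (Polynomial.splits_iff_card_roots.mp hsplits)
  have hrep : G.roots = Multiset.replicate G.roots.card (τ : ℂ) :=
    Multiset.eq_replicate_card.mpr hroots
  rw [hrep] at hnodup
  have hle1 : G.roots.card ≤ 1 := by
    have h := Multiset.nodup_iff_count_le_one.mp hnodup (τ : ℂ)
    rwa [Multiset.count_replicate_self] at h
  have hdeg : g.natDegree = 1 := by
    have h1 : G.natDegree = g.natDegree := (minpoly.monic hintF).natDegree_map φ
    have h2 : 1 ≤ g.natDegree := minpoly.natDegree_pos hintF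
    omega
  have := minpoly.natDegree_eq_one_iff.mp hdeg
  obtain ⟨y, hy⟩ := this
  rw [← hy]
  exact y.2

lemma salem_deg {τ : ℝ} (hτ : IsSalem τ) {n : ℕ} (hn : 1 ≤ n) :
    (minpoly ℚ (τ ^ n)).natDegree = (minpoly ℚ τ).natDegree := by
  have hint : IsIntegral ℚ τ := salem_int hτ
  have h1 := IntermediateField.adjoin.finrank (hint.pow n)
  have h2 := IntermediateField.adjoin.finrank hint
  rw [salem_adjoin_pow_eq hτ hn] at h1
  omega

set_option synthInstance.maxHeartbeats 1000000 in
set_option maxHeartbeats 2000000 in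
lemma salem_coeff_eq {τ : ℝ} (hτ : IsSalem τ) {n : ℕ} (hn : 1 ≤ n) :
    algebraMap ℚ ℂ (-(minpoly ℚ (τ ^ n)).nextCoeff) =
      (((minpoly ℚ τ).aroots ℂ).map (· ^ n)).sum := by
  classical
  have hint : IsIntegral ℚ τ := salem_int hτ
  haveI : FiniteDimensional ℚ ℚ⟮τ⟯ := IntermediateField.adjoin.finiteDimensional hint
  set y : ℚ⟮τ⟯ := AdjoinSimple.gen ℚ τ with hy
  set x : ℚ⟮τ⟯ := y ^ n with hx
  have hxmap : algebraMap (↥ℚ⟮τ⟯) ℝ x = τ ^ n := by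
    rw [hx, map_pow, hy, AdjoinSimple.algebraMap_gen]
  have hxint : IsIntegral ℚ x := IsIntegral.of_finite ℚ x
  have hminx : minpoly ℚ x = minpoly ℚ (τ ^ n) := by
    rw [← hxmap, minpoly.algebraMap_eq (algebraMap (↥ℚ⟮τ⟯) ℝ).injective]
  -- finrank ℚ⟮x⟯ ℚ⟮τ⟯ = 1
  have hfr1 : Module.finrank ℚ (↥ℚ⟮τ⟯) = (minpoly ℚ τ).natDegree :=
    IntermediateField.adjoin.finrank hint
  have hfr2 : Module.finrank ℚ (↥ℚ⟮x⟯) = (minpoly ℚ τ).natDegree := by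
    rw [IntermediateField.adjoin.finrank hxint, hminx, salem_deg hτ hn]
  have hmul := Module.finrank_mul_finrank ℚ (↥ℚ⟮x⟯) (↥ℚ⟮τ⟯)
  have hdpos : 0 < (minpoly ℚ τ).natDegree := minpoly.natDegree_pos hint
  have hfr3 : Module.finrank (↥ℚ⟮x⟯) (↥ℚ⟮τ⟯) = 1 := by
    rw [hfr2] at hmul
    have h4 : 0 < Module.finrank (↥ℚ⟮x⟯) (↥ℚ⟮τ⟯) := Module.finrank_pos
    nlinarith [hmul, hfr1, hdpos, h4]
  -- trace equals -nextCoeff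
  have htr1 : Algebra.trace ℚ (↥ℚ⟮τ⟯) x = -(minpoly ℚ (τ ^ n)).nextCoeff := by
    rw [trace_eq_trace_adjoin ℚ x, hfr3, one_smul]
    have pb := IntermediateField.adjoin.powerBasis hxint
    rw [← IntermediateField.adjoin.powerBasis_gen hxint,
      PowerBasis.trace_gen_eq_nextCoeff_minpoly,
      IntermediateField.adjoin.powerBasis_gen hxint,
      IntermediateField.minpoly_gen, hminx]
  -- trace equals sum of embeddings
  have htr2 : algebraMap ℚ ℂ (Algebra.trace ℚ (↥ℚ⟮τ⟯) x)
      = ∑ σ : (↥ℚ⟮τ⟯) →ₐ[ℚ] ℂ, σ x := trace_eq_sum_embeddings ℂ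
  -- sum of embeddings equals sum over roots
  set m := (minpoly ℚ τ).aroots ℂ with hm
  have hnodup : m.Nodup :=
    Polynomial.nodup_roots ((minpoly.irreducible hint).separable.map)
  set e := IntermediateField.algHomAdjoinIntegralEquiv ℚ (K := ℂ) hint with he
  have hgen : ∀ σ : (↥ℚ⟮τ⟯) →ₐ[ℚ] ℂ, σ y = (e σ : ℂ) := by
    intro σ
    conv_lhs => rw [← e.symm_apply_apply σ]
    exact IntermediateField.algHomAdjoinIntegralEquiv_symm_apply_gen ℚ hint (e σ)
  have hinj : Function.Injective (fun σ : (↥ℚ⟮τ⟯) →ₐ[ℚ] ℂ => σ y) := by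
    intro σ1 σ2 h
    have : (e σ1 : ℂ) = (e σ2 : ℂ) := by rw [← hgen, ← hgen]; exact h
    exact e.injective (Subtype.ext this)
  have himg : Finset.image (fun σ : (↥ℚ⟮τ⟯) →ₐ[ℚ] ℂ => σ y) Finset.univ = m.toFinset := by
    apply Finset.ext
    intro z
    simp only [Finset.mem_image, Finset.mem_univ, true_and, Multiset.mem_toFinset]
    constructor
    · rintro ⟨σ, rfl⟩
      rw [hgen σ]
      exact (e σ).2
    · intro hz
      refine ⟨e.symm ⟨z, hz⟩, ?_⟩
      exact IntermediateField.algHomAdjoinIntegralEquiv_symm_apply_gen ℚ hint ⟨z, hz⟩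
  have hsum1 : ∑ σ : (↥ℚ⟮τ⟯) →ₐ[ℚ] ℂ, σ x = ∑ z ∈ m.toFinset, z ^ n := by
    rw [← himg, Finset.sum_image (fun a _ b _ h => hinj h)]
    apply Finset.sum_congr rfl
    intro σ _
    rw [hx, map_pow]
  have hsum2 : ∑ z ∈ m.toFinset, z ^ n = (m.map (· ^ n)).sum := by
    rw [Finset.sum, Multiset.toFinset_val, Multiset.dedup_eq_self.mpr hnodup]
  rw [← htr1, htr2, hsum1, hsum2]

lemma salem_key {τ : ℝ} (hτ : IsSalem τ) {n : ℕ} (hn : 1 ≤ n) :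
    |(((minpoly ℚ (τ ^ n)).coeff ((minpoly ℚ τ).natDegree - 1) : ℚ) : ℝ) + τ ^ n + (τ⁻¹) ^ n|
      ≤ ((minpoly ℚ τ).natDegree : ℝ) := by
  classical
  have hτ1 : (1 : ℝ) < τ := hτ.1
  have hτ0 : (0 : ℝ) < τ := lt_trans one_pos hτ1
  have hint : IsIntegral ℚ τ := salem_int hτ
  set p := minpoly ℚ τ with hp
  set d := p.natDegree with hdp
  have hd4 : 4 ≤ d := hτ.2.2.1
  have hq : (minpoly ℚ (τ ^ n)).natDegree = d := salem_deg hτ hn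
  have hnext : (minpoly ℚ (τ ^ n)).nextCoeff = (minpoly ℚ (τ ^ n)).coeff (d - 1) := by
    rw [Polynomial.nextCoeff_of_natDegree_pos (by omega), hq]
  set m := p.aroots ℂ with hm
  have hpne : p ≠ 0 := minpoly.ne_zero hint
  have hnodup : m.Nodup := Polynomial.nodup_roots ((minpoly.irreducible hint).separable.map)
  have hmemτ : (τ : ℂ) ∈ m := by
    rw [hm, Polynomial.mem_aroots]
    refine ⟨hpne, ?_⟩
    rw [show ((τ : ℝ) : ℂ) = algebraMap ℝ ℂ τ from rfl, Polynomial.aeval_algebraMap_apply,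
      minpoly.aeval, map_zero]
  have hmemInv : ((τ : ℂ))⁻¹ ∈ m := by
    rw [hm, Polynomial.mem_aroots]
    refine ⟨hpne, ?_⟩
    rw [show ((τ : ℂ))⁻¹ = algebraMap ℝ ℂ τ⁻¹ by push_cast; rfl, Polynomial.aeval_algebraMap_apply,
      hτ.2.2.2.1, map_zero]
  have hne : ((τ : ℂ))⁻¹ ≠ (τ : ℂ) := by
    intro h
    have h2 : τ⁻¹ = τ := by exact_mod_cast h
    have h3 : τ⁻¹ < 1 := inv_lt_one_of_one_lt₀ hτ1
    linarith
  set rest := (m.erase (τ : ℂ)).erase ((τ : ℂ))⁻¹ with hrest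
  have hmemInv' : ((τ : ℂ))⁻¹ ∈ m.erase (τ : ℂ) := (Multiset.mem_erase_of_ne hne).mpr hmemInv
  have hm1 : m = (τ : ℂ) ::ₘ m.erase (τ : ℂ) := (Multiset.cons_erase hmemτ).symm
  have hm2 : m.erase (τ : ℂ) = ((τ : ℂ))⁻¹ ::ₘ rest := (Multiset.cons_erase hmemInv').symm
  -- the sum identity
  have hkey := salem_coeff_eq hτ hn
  rw [hnext] at hkey
  have hS : (m.map (· ^ n)).sum
      = (τ : ℂ) ^ n + (((τ : ℂ))⁻¹) ^ n + (rest.map (· ^ n)).sum := by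
    conv_lhs => rw [hm1, hm2]
    rw [Multiset.map_cons, Multiset.map_cons, Multiset.sum_cons, Multiset.sum_cons]
    ring
  -- bound the rest
  have hrest_card : rest.card = d - 2 := by
    have hcard : m.card = d := by
      rw [hm, hdp, Polynomial.aroots_def]
      rw [← (IsAlgClosed.splits (p.map (algebraMap ℚ ℂ))).natDegree_eq_card_roots, Polynomial.natDegree_map]
    rw [hrest, Multiset.card_erase_of_mem hmemInv', Multiset.card_erase_of_mem hmemτ, hcard]
    rfl
  have hrest_bound : ‖(rest.map (· ^ n)).sum‖ ≤ (d : ℝ) := by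
    calc ‖(rest.map (· ^ n)).sum‖ ≤ ((rest.map (· ^ n)).map (fun z => ‖z‖)).sum :=
          norm_multiset_sum_le _
      _ ≤ ((rest.map (· ^ n)).map (fun z => ‖z‖)).card • (1 : ℝ) := by
          apply Multiset.sum_le_card_nsmul
          intro x hx
          rw [Multiset.map_map, Multiset.mem_map] at hx
          obtain ⟨z, hz, rfl⟩ := hx
          have hzmem : z ∈ m.erase (τ : ℂ) ∧ z ≠ ((τ : ℂ))⁻¹ := by
            have := (Multiset.Nodup.mem_erase_iff (hnodup.erase _)).mp hz
            exact ⟨this.2, this.1⟩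
          have hzm : z ∈ m ∧ z ≠ (τ : ℂ) := by
            have := (Multiset.Nodup.mem_erase_iff hnodup).mp hzmem.1
            exact ⟨this.2, this.1⟩
          have habs : ‖z‖ = 1 := hτ.2.2.2.2 z hzm.1 hzm.2 hzmem.2
          simp only [Function.comp_apply, norm_pow, habs, one_pow, le_refl]
      _ ≤ (d : ℝ) := by
          rw [Multiset.card_map, Multiset.card_map, hrest_card, nsmul_eq_mul, mul_one]
          exact_mod_cast Nat.sub_le d 2
  -- put it together
  have hC : ((((minpoly ℚ (τ ^ n)).coeff (d - 1) : ℚ) : ℝ) : ℂ) + (τ : ℂ) ^ n + (((τ : ℂ))⁻¹) ^ n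
      = -(rest.map (· ^ n)).sum := by
    have h1 : ((((minpoly ℚ (τ ^ n)).coeff (d - 1) : ℚ) : ℝ) : ℂ)
        = -(m.map (· ^ n)).sum := by
      rw [← hkey]
      push_cast
      rw [neg_neg]
      norm_cast
    rw [h1, hS]
    ring
  have habs2 : |(((minpoly ℚ (τ ^ n)).coeff (d - 1) : ℚ) : ℝ) + τ ^ n + (τ⁻¹) ^ n|
      = ‖((((minpoly ℚ (τ ^ n)).coeff (d - 1) : ℚ) : ℝ) : ℂ) + (τ : ℂ) ^ n + (((τ : ℂ))⁻¹) ^ n‖ := by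
    rw [show ((((minpoly ℚ (τ ^ n)).coeff (d - 1) : ℚ) : ℝ) : ℂ) + (τ : ℂ) ^ n + (((τ : ℂ))⁻¹) ^ n
      = (((((minpoly ℚ (τ ^ n)).coeff (d - 1) : ℚ) : ℝ) + τ ^ n + (τ⁻¹) ^ n : ℝ) : ℂ) by push_cast; ring]
    rw [Complex.norm_real, Real.norm_eq_abs]
  rw [habs2, hC, norm_neg]
  exact hrest_bound

/-- Theorem 3(a), first part: if `τ` is a Salem number of degree `d` and `a_{d-1,n}`
is the coefficient of `x^(d-1)` in the minimal polynomial of `τ ^ n`, then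
`a_{d-1,n} ≠ 0` for all sufficiently large `n` and `a_{d-1,n+1} / a_{d-1,n} → τ`. -/
theorem salem_coeff_ratio_tendsto
    (τ : ℝ) (hτ : IsSalem τ) (d : ℕ) (hd : d = (minpoly ℚ τ).natDegree)
    (a : ℕ → ℝ) (ha : ∀ n, a n = ((minpoly ℚ (τ ^ n)).coeff (d - 1) : ℝ)) :
    (∀ᶠ n in Filter.atTop, a n ≠ 0) ∧
      Filter.Tendsto (fun n => a (n + 1) / a n) Filter.atTop (nhds τ) := by
  have hτ1 : (1 : ℝ) < τ := hτ.1
  have hτ0 : (0 : ℝ) < τ := lt_trans one_pos hτ1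
  have hτne : τ ≠ 0 := ne_of_gt hτ0
  set ρ : ℝ := τ⁻¹ with hρ
  have hρ0 : 0 < ρ := inv_pos.mpr hτ0
  have hρ1 : ρ < 1 := inv_lt_one_of_one_lt₀ hτ1
  set s : ℕ → ℝ := fun n => -(a n) - τ ^ n - ρ ^ n with hs
  have hbound : ∀ n, 1 ≤ n → |s n| ≤ (d : ℝ) := by
    intro n hn
    have h := salem_key hτ hn
    rw [← hd] at h
    have heq : s n = -((((minpoly ℚ (τ ^ n)).coeff (d - 1) : ℚ) : ℝ) + τ ^ n + ρ ^ n) := by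
      rw [hs]; simp only; rw [ha n]; ring
    rw [heq, abs_neg]
    exact h
  set b : ℕ → ℝ := fun n => a n / (-(τ ^ n)) with hb
  have hτnne : ∀ n : ℕ, τ ^ n ≠ 0 := fun n => pow_ne_zero n hτne
  have hab : ∀ n, a n = b n * (-(τ ^ n)) := by
    intro n
    rw [hb]
    field_simp
  -- b n - 1 bound
  have hbform : ∀ n, 1 ≤ n → b n - 1 = (ρ ^ n + s n) * ρ ^ n := by
    intro n hn
    have han : a n = -(τ ^ n) - ρ ^ n - s n := by rw [hs]; ring
    have hinv : ρ ^ n * τ ^ n = 1 := by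
      rw [hρ, ← mul_pow, inv_mul_cancel₀ hτne, one_pow]
    rw [hb]
    simp only
    rw [han, sub_eq_iff_eq_add, div_eq_iff (neg_ne_zero.mpr (hτnne n))]
    linear_combination (ρ ^ n + s n) * hinv
  have hbnd2 : ∀ᶠ n in Filter.atTop, ‖b n - 1‖ ≤ (1 + d) * ρ ^ n := by
    rw [Filter.eventually_atTop]
    refine ⟨1, fun n hn => ?_⟩
    rw [hbform n hn, Real.norm_eq_abs, abs_mul]
    have h1 : |ρ ^ n + s n| ≤ 1 + d := by
      have := hbound n hn
      have h2 : |ρ ^ n| ≤ 1 := by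
        rw [abs_of_pos (pow_pos hρ0 n)]
        exact pow_le_one₀ hρ0.le hρ1.le
      calc |ρ ^ n + s n| ≤ |ρ ^ n| + |s n| := abs_add_le _ _
        _ ≤ 1 + d := by linarith
    have h2 : |ρ ^ n| = ρ ^ n := abs_of_pos (pow_pos hρ0 n)
    rw [h2]
    exact mul_le_mul_of_nonneg_right h1 (pow_pos hρ0 n).le
  have htends0 : Filter.Tendsto (fun n : ℕ => (1 + (d : ℝ)) * ρ ^ n) Filter.atTop (nhds 0) := by
    have := (tendsto_pow_atTop_nhds_zero_of_lt_one hρ0.le hρ1).const_mul (1 + (d : ℝ))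
    simpa using this
  have hb1 : Filter.Tendsto b Filter.atTop (nhds 1) := by
    have h0 : Filter.Tendsto (fun n => b n - 1) Filter.atTop (nhds 0) :=
      squeeze_zero_norm' hbnd2 htends0
    have := h0.add_const 1
    simpa using this
  have hbne : ∀ᶠ n in Filter.atTop, b n ≠ 0 := by
    have : ∀ᶠ x in nhds (1 : ℝ), x ≠ 0 := eventually_ne_nhds one_ne_zero
    exact hb1.eventually this
  have hane : ∀ᶠ n in Filter.atTop, a n ≠ 0 := by
    filter_upwards [hbne] with n hbn
    rw [hab n]
    exact mul_ne_zero hbn (neg_ne_zero.mpr (hτnne n))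
  refine ⟨hane, ?_⟩
  -- ratio identity
  have key : ∀ n, b (n + 1) / b n * τ = a (n + 1) / a n := by
    intro n
    by_cases h : a n = 0
    · have hbn : b n = 0 := by rw [hb]; simp [h]
      rw [h, hbn]
      simp
    · have hbn : b n ≠ 0 := by
        rw [hb]
        simp only
        exact div_ne_zero h (neg_ne_zero.mpr (hτnne n))
      rw [hb]
      simp only
      rw [div_div_div_comm]
      field_simp
      ring
  have hquot : Filter.Tendsto (fun n => b (n + 1) / b n) Filter.atTop (nhds 1) := by
    have h1 : Filter.Tendsto (fun n => b (n + 1)) Filter.atTop (nhds 1) :=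
      hb1.comp (Filter.tendsto_add_atTop_nat 1)
    have := h1.div hb1 one_ne_zero
    rw [div_one] at this; exact this
  have hfinal : Filter.Tendsto (fun n => b (n + 1) / b n * τ) Filter.atTop (nhds τ) := by
    have := hquot.mul_const τ
    simpa using this
  exact hfinal.congr fun n => key n
end

section
/- Let τ > 1 be a Salem number of degree d and, for n ∈ ℕ, let a_{k,n} denote the coefficient of x^k in the minimal polynomial P_n(x) of τⁿ over ℚ. Then for every n ≥ 1 and every k with 1 ≤ k ≤ d − 3, one has |a_{d-k-1,n}| ≤ C(d−2, k)·(|a_{d-1,n}| + d − 2) + C(d−2, k−1) + C(d−2, k+1), where C(m, j) denotes the binomial coefficient. -/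
open Polynomial IntermediateField

lemma salem_exists_conj (x w : ℂ) (hx : IsIntegral ℚ x) (hw : IsIntegral ℚ w)
    {u : ℂ} (hu : u ∈ adjoin ℚ ({x, w} : Set ℂ)) {y : ℂ}
    (hy : (Polynomial.aeval y) (minpoly ℚ u) = 0) :
    ∃ φ : adjoin ℚ ({x, w} : Set ℂ) →ₐ[ℚ] ℂ, φ ⟨u, hu⟩ = y :=
  IntermediateField.exists_algHom_adjoin_of_splits_of_aeval
    (fun s hs => ⟨by rcases hs with h | h <;> subst h <;> assumption,
      IsAlgClosed.splits _⟩) hu hy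

lemma salem_aeval_subfield (E : IntermediateField ℚ ℂ) (a : E) (p : ℚ[X])
    (h : Polynomial.aeval (a : ℂ) p = 0) : Polynomial.aeval a p = 0 := by
  apply (algebraMap E ℂ).injective
  rw [map_zero, ← Polynomial.aeval_algebraMap_apply]
  exact h

lemma salem_esymm_cons (a : ℂ) (s : Multiset ℂ) (m : ℕ) :
    (a ::ₘ s).esymm (m + 1) = s.esymm (m + 1) + a * s.esymm m := by
  rw [Multiset.esymm, Multiset.powersetCard_cons, Multiset.map_add, Multiset.sum_add,
    Multiset.map_map, Multiset.esymm]
  congr 1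
  rw [Multiset.esymm, ← Multiset.sum_map_mul_left]
  exact congrArg _ (Multiset.map_congr rfl fun x _ => by simp)

lemma salem_esymm_bound (s : Multiset ℂ) (h : ∀ x ∈ s, ‖x‖ = 1) (m : ℕ) :
    ‖s.esymm m‖ ≤ (Multiset.card s).choose m := by
  rw [Multiset.esymm]
  refine le_trans (norm_multiset_sum_le _) ?_
  have : ∀ x ∈ ((s.powersetCard m).map Multiset.prod).map norm, x ≤ (1:ℝ) := by
    intro x hx
    simp only [Multiset.map_map, Multiset.mem_map, Function.comp_apply] at hx
    obtain ⟨P, hP, rfl⟩ := hx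
    obtain ⟨hPle, -⟩ := Multiset.mem_powersetCard.1 hP
    rw [show ‖P.prod‖ = (P.map norm).prod from map_multiset_prod (normHom : ℂ →*₀ ℝ) P]
    rw [Multiset.prod_eq_one]
    intro b hb
    obtain ⟨c, hc, rfl⟩ := Multiset.mem_map.1 hb
    exact h c (Multiset.mem_of_le hPle hc)
  refine le_trans (Multiset.sum_le_card_nsmul _ 1 this) ?_
  simp [Multiset.card_powersetCard]

lemma salem_esymm_sum (s : Multiset ℂ) : s.esymm 1 = s.sum := by
  rw [Multiset.esymm, Multiset.powersetCard_one, Multiset.map_map]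
  simp

/-- Theorem 3(c): if `τ` is a Salem number of degree `d` and `a_{k,n}` is the coefficient
of `x^k` in the minimal polynomial of `τ ^ n`, then for all `n ≥ 1` and `1 ≤ k ≤ d - 3`,
`|a_{d-k-1,n}| ≤ C(d-2,k) (|a_{d-1,n}| + d - 2) + C(d-2,k-1) + C(d-2,k+1)`. -/
theorem salem_inner_coeff_bound
    (τ : ℝ) (hτ : IsSalem τ) (d : ℕ) (hd : d = (minpoly ℚ τ).natDegree)
    (n : ℕ) (hn : 1 ≤ n) (k : ℕ) (hk1 : 1 ≤ k) (hk2 : k ≤ d - 3) :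
    |((minpoly ℚ (τ ^ n)).coeff (d - k - 1) : ℝ)| ≤
      ((d - 2).choose k : ℝ) * (|((minpoly ℚ (τ ^ n)).coeff (d - 1) : ℝ)| + (d : ℝ) - 2) +
        ((d - 2).choose (k - 1) : ℝ) + ((d - 2).choose (k + 1) : ℝ) := by
  obtain ⟨hτ1, hτZ, hτdeg, hτinv, hτabs⟩ := hτ
  have hτQ : IsIntegral ℚ τ := hτZ.tower_top
  set t : ℂ := (τ : ℂ) with ht_def
  have hmapτ : algebraMap ℝ ℂ τ = t := rfl
  have htQ : IsIntegral ℚ t := hmapτ ▸ hτQ.map (IsScalarTower.toAlgHom ℚ ℝ ℂ)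
  have hτ0 : (0:ℝ) < τ := lt_trans zero_lt_one hτ1
  have ht0 : t ≠ 0 := by
    simp only [ht_def, ne_eq, Complex.ofReal_eq_zero]; exact ne_of_gt hτ0
  set P := minpoly ℚ τ with hP_def
  have hd4 : 4 ≤ d := hd ▸ hτdeg
  have hminpt : minpoly ℚ t = P := by
    rw [← hmapτ]; exact minpoly.algebraMap_eq (algebraMap ℝ ℂ).injective τ
  have hPt : Polynomial.aeval t P = 0 := by
    rw [← hmapτ, Polynomial.aeval_algebraMap_apply, minpoly.aeval, map_zero]
  have hPinv : Polynomial.aeval t⁻¹ P = 0 := by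
    have h := congrArg (algebraMap ℝ ℂ) hτinv
    rw [map_zero, ← Polynomial.aeval_algebraMap_apply] at h
    have h2 : algebraMap ℝ ℂ τ⁻¹ = t⁻¹ := by
      rw [map_inv₀, hmapτ]
    rwa [h2] at h
  have hPmonic : P.Monic := minpoly.monic hτQ
  have hP0 : P ≠ 0 := hPmonic.ne_zero
  -- roots of P over ℂ
  set PC := P.map (algebraMap ℚ ℂ) with hPC_def
  have hmemP : ∀ z : ℂ, z ∈ PC.roots ↔ Polynomial.aeval z P = 0 := by
    intro z
    rw [hPC_def, Polynomial.mem_roots_map (by exact hP0), Polynomial.aeval_def]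
  -- trichotomy for roots of P
  have hPtri : ∀ z : ℂ, Polynomial.aeval z P = 0 → z = t ∨ z = t⁻¹ ∨ ‖z‖ = 1 := by
    intro z hz
    by_cases h1 : z = t
    · exact Or.inl h1
    by_cases h2 : z = t⁻¹
    · exact Or.inr (Or.inl h2)
    · exact Or.inr (Or.inr (hτabs z ((hmemP z).2 hz) h1 h2))
  have habs_t : ‖t‖ = τ := by
    rw [ht_def, Complex.norm_real, Real.norm_eq_abs, abs_of_pos hτ0]
  -- minimal polynomial of τ^n
  set Q := minpoly ℚ (τ ^ n) with hQ_def
  have hτnQ : IsIntegral ℚ (τ ^ n) := hτQ.pow n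
  have hmapτn : algebraMap ℝ ℂ (τ ^ n) = t ^ n := by push_cast; rfl
  have htnQ : IsIntegral ℚ (t ^ n) := hmapτn ▸ hτnQ.map (IsScalarTower.toAlgHom ℚ ℝ ℂ)
  have hminptn : minpoly ℚ (t ^ n) = Q := by
    rw [← hmapτn]; exact minpoly.algebraMap_eq (algebraMap ℝ ℂ).injective (τ ^ n)
  have hQmonic : Q.Monic := minpoly.monic hτnQ
  have hQ0 : Q ≠ 0 := hQmonic.ne_zero
  have hQtn : Polynomial.aeval (t ^ n) Q = 0 := by
    rw [← hminptn]; exact minpoly.aeval ℚ (t ^ n)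
  set QC := Q.map (algebraMap ℚ ℂ) with hQC_def
  have hmemQ : ∀ z : ℂ, z ∈ QC.roots ↔ Polynomial.aeval z Q = 0 := by
    intro z
    rw [hQC_def, Polynomial.mem_roots_map (by exact hQ0), Polynomial.aeval_def]
  -- membership tools for adjoin
  have hmem_t : t ∈ adjoin ℚ ({t, t} : Set ℂ) := subset_adjoin ℚ _ (by simp)
  have hmem_tn : t ^ n ∈ adjoin ℚ ({t, t} : Set ℂ) := pow_mem hmem_t n
  -- every power of a root of P is a root of Q
  have hroot_pow : ∀ z : ℂ, Polynomial.aeval z P = 0 → Polynomial.aeval (z ^ n) Q = 0 := by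
    intro z hz
    obtain ⟨φ, hφ⟩ := salem_exists_conj t t htQ htQ hmem_t (hminpt.symm ▸ hz)
    have h0 : Polynomial.aeval ((⟨t, hmem_t⟩ : adjoin ℚ ({t, t} : Set ℂ)) ^ n) Q = 0 := by
      apply salem_aeval_subfield
      push_cast
      exact hQtn
    have := Polynomial.aeval_algHom_apply φ ((⟨t, hmem_t⟩ : adjoin ℚ ({t, t} : Set ℂ)) ^ n) Q
    rw [h0, map_zero, map_pow, hφ] at this
    exact this
  -- every root of Q is the n-th power of a root of P
  have hroot_struct : ∀ r : ℂ, Polynomial.aeval r Q = 0 →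
      ∃ z : ℂ, Polynomial.aeval z P = 0 ∧ z ^ n = r := by
    intro r hr
    obtain ⟨φ, hφ⟩ := salem_exists_conj t t htQ htQ hmem_tn (hminptn.symm ▸ hr)
    refine ⟨φ ⟨t, hmem_t⟩, ?_, ?_⟩
    · have h0 : Polynomial.aeval (⟨t, hmem_t⟩ : adjoin ℚ ({t, t} : Set ℂ)) P = 0 :=
        salem_aeval_subfield _ _ _ hPt
      have := Polynomial.aeval_algHom_apply φ (⟨t, hmem_t⟩ : adjoin ℚ ({t, t} : Set ℂ)) P
      rw [h0, map_zero] at this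
      exact this
    · rw [← map_pow]
      have h1 : (⟨t, hmem_t⟩ : adjoin ℚ ({t, t} : Set ℂ)) ^ n = ⟨t ^ n, hmem_tn⟩ := by
        ext; push_cast; rfl
      rw [h1, hφ]
  -- τ > 1 facts
  have hτn1 : 1 < τ ^ n := one_lt_pow₀ hτ1 (by omega)
  have habs_tn : ‖t ^ n‖ = τ ^ n := by rw [norm_pow, habs_t]
  have habs_tin : ‖t⁻¹ ^ n‖ = (τ⁻¹) ^ n := by
    rw [norm_pow, norm_inv, habs_t]
  have hτin1 : τ⁻¹ ^ n < 1 := by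
    apply pow_lt_one₀ (by positivity) _ (by omega)
    exact inv_lt_one_of_one_lt₀ hτ1
  -- the only root of P with |z|^n = τ^n is t
  have huniq : ∀ z : ℂ, Polynomial.aeval z P = 0 → ‖z‖ ^ n = τ ^ n → z = t := by
    intro z hz habs
    rcases hPtri z hz with h | h | h
    · exact h
    · exfalso
      rw [h, norm_inv, habs_t] at habs
      exact absurd habs (ne_of_lt (lt_trans hτin1 hτn1))
    · exfalso
      rw [h, one_pow] at habs
      exact absurd habs (ne_of_lt hτn1)
  -- trichotomy for roots of Q
  have hQtri : ∀ r : ℂ, Polynomial.aeval r Q = 0 →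
      r = t ^ n ∨ r = t⁻¹ ^ n ∨ ‖r‖ = 1 := by
    intro r hr
    obtain ⟨z, hz, rfl⟩ := hroot_struct r hr
    rcases hPtri z hz with h | h | h
    · exact Or.inl (by rw [h])
    · exact Or.inr (Or.inl (by rw [h]))
    · exact Or.inr (Or.inr (by rw [norm_pow, h, one_pow]))
  -- degree of Q equals d
  have hsepP : PC.roots.Nodup :=
    Polynomial.nodup_roots (((minpoly.irreducible hτQ).separable).map)
  have hsepQ : QC.roots.Nodup :=
    Polynomial.nodup_roots (((minpoly.irreducible hτnQ).separable).map)
  have hsplitsP : (P.map (algebraMap ℚ ℂ)).Splits := IsAlgClosed.splits _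
  have hsplitsQ : (Q.map (algebraMap ℚ ℂ)).Splits := IsAlgClosed.splits _
  have hcardP : Multiset.card PC.roots = d := by
    rw [hd, hP_def]
    exact ((Polynomial.natDegree_map _).symm.trans (Polynomial.Splits.natDegree_eq_card_roots hsplitsP)).symm
  have hcardQ : Multiset.card QC.roots = Q.natDegree :=
    ((Polynomial.natDegree_map _).symm.trans (Polynomial.Splits.natDegree_eq_card_roots hsplitsQ)).symm
  have hdegQd : Q.natDegree = d := by
    have hle : Q.natDegree ≤ d := by
      haveI : FiniteDimensional ℚ ℚ⟮t⟯ := IntermediateField.adjoin.finiteDimensional htQ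
      have hfin : Module.finrank ℚ ℚ⟮t⟯ = d := by
        rw [IntermediateField.adjoin.finrank htQ, hminpt, hd]
      have hmem : t ^ n ∈ ℚ⟮t⟯ := pow_mem (IntermediateField.mem_adjoin_simple_self ℚ t) n
      have heq : minpoly ℚ (⟨t ^ n, hmem⟩ : ℚ⟮t⟯) = Q := by
        rw [← hminptn]
        have h5 := minpoly.algebraMap_eq (A := ℚ) (algebraMap ℚ⟮t⟯ ℂ).injective (⟨t ^ n, hmem⟩ : ℚ⟮t⟯)
        rw [show (algebraMap ℚ⟮t⟯ ℂ) ⟨t ^ n, hmem⟩ = t ^ n from rfl] at h5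
        exact h5.symm
      rw [← heq, ← hfin]
      exact minpoly.natDegree_le _
    have hge : d ≤ Q.natDegree := by
      rw [← hcardQ, ← Multiset.toFinset_card_of_nodup hsepQ]
      rw [← hcardP, ← Multiset.toFinset_card_of_nodup hsepP]
      apply Finset.card_le_card_of_injOn (fun z => z ^ n)
      · intro z hz
        rw [Finset.mem_coe, Multiset.mem_toFinset] at hz ⊢
        exact (hmemQ _).2 (hroot_pow z ((hmemP z).1 hz))
      · intro z hz w hw hzw
        simp only [Finset.coe_sort_coe, Finset.mem_coe, Multiset.mem_toFinset] at hz hw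
        simp only at hzw
        have hzP : Polynomial.aeval z P = 0 := (hmemP z).1 hz
        have hwP : Polynomial.aeval w P = 0 := (hmemP w).1 hw
        have hzint : IsIntegral ℚ z := ⟨P, hPmonic, by rw [← Polynomial.aeval_def]; exact hzP⟩
        have hwint : IsIntegral ℚ w := ⟨P, hPmonic, by rw [← Polynomial.aeval_def]; exact hwP⟩
        have hminz : minpoly ℚ z = P :=
          (minpoly.eq_of_irreducible_of_monic (minpoly.irreducible hτQ) hzP hPmonic).symm
        have hmem_z : z ∈ adjoin ℚ ({z, w} : Set ℂ) := subset_adjoin ℚ _ (by simp)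
        have hmem_w : w ∈ adjoin ℚ ({z, w} : Set ℂ) := subset_adjoin ℚ _ (by simp)
        obtain ⟨φ, hφ⟩ := salem_exists_conj z w hzint hwint hmem_z (by rw [hminz]; exact hPt)
        have hwP' : Polynomial.aeval (⟨w, hmem_w⟩ : adjoin ℚ ({z, w} : Set ℂ)) P = 0 :=
          salem_aeval_subfield _ _ _ hwP
        have huP : Polynomial.aeval (φ ⟨w, hmem_w⟩) P = 0 := by
          have := Polynomial.aeval_algHom_apply φ (⟨w, hmem_w⟩ : adjoin ℚ ({z, w} : Set ℂ)) P
          rw [hwP', map_zero] at this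
          exact this
        have hpow : (φ ⟨w, hmem_w⟩) ^ n = t ^ n := by
          rw [← map_pow]
          have h1 : (⟨w, hmem_w⟩ : adjoin ℚ ({z, w} : Set ℂ)) ^ n = ⟨w ^ n, pow_mem hmem_w n⟩ := by
            ext; push_cast; rfl
          have h2 : (⟨z, hmem_z⟩ : adjoin ℚ ({z, w} : Set ℂ)) ^ n = ⟨z ^ n, pow_mem hmem_z n⟩ := by
            ext; push_cast; rfl
          have h3 : (⟨w ^ n, pow_mem hmem_w n⟩ : adjoin ℚ ({z, w} : Set ℂ)) = ⟨z ^ n, pow_mem hmem_z n⟩ := by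
            ext; exact hzw.symm
          rw [h1, h3, ← h2, map_pow, hφ]
        have habs_u : ‖φ ⟨w, hmem_w⟩‖ ^ n = τ ^ n := by
          rw [← norm_pow, hpow, habs_tn]
        have hu_t : φ ⟨w, hmem_w⟩ = t := huniq _ huP habs_u
        have : φ ⟨w, hmem_w⟩ = φ ⟨z, hmem_z⟩ := by rw [hu_t, hφ]
        have h4 := φ.toRingHom.injective this
        have h5 : w = z := congrArg Subtype.val h4
        exact h5.symm
    omega
  -- root multiset decomposition
  set R := QC.roots with hR_def
  have hcardR : Multiset.card R = d := by rw [hR_def, hcardQ, hdegQd]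
  have htn_mem : t ^ n ∈ R := (hmemQ _).2 hQtn
  have htin_mem : t⁻¹ ^ n ∈ R := (hmemQ _).2 (hroot_pow t⁻¹ hPinv)
  have hne : t ^ n ≠ t⁻¹ ^ n := by
    intro h
    have := congrArg norm h
    rw [habs_tn, habs_tin] at this
    exact absurd this (ne_of_gt (lt_trans hτin1 hτn1))
  have htin_mem' : t⁻¹ ^ n ∈ R.erase (t ^ n) := (Multiset.mem_erase_of_ne hne.symm).2 htin_mem
  set S := (R.erase (t ^ n)).erase (t⁻¹ ^ n) with hS_def
  have hR_eq : R = t ^ n ::ₘ t⁻¹ ^ n ::ₘ S := by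
    rw [hS_def, Multiset.cons_erase htin_mem', Multiset.cons_erase htn_mem]
  have hcardS : Multiset.card S = d - 2 := by
    have := congrArg Multiset.card hR_eq
    simp only [Multiset.card_cons] at this
    omega
  have hSabs : ∀ x ∈ S, ‖x‖ = 1 := by
    intro x hx
    have hx1 := ((hsepQ.erase _).mem_erase_iff).1 hx
    have hx2 := (hsepQ.mem_erase_iff).1 hx1.2
    rcases hQtri x ((hmemQ x).1 hx2.2) with h | h | h
    · exact absurd h hx2.1
    · exact absurd h hx1.1
    · exact h
  -- Vieta
  have hQC_prod : QC = (R.map fun a => X - C a).prod :=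
    Polynomial.Splits.eq_prod_roots_of_monic hsplitsQ (hQmonic.map _)
  have hcoeff : ∀ j, j ≤ d → QC.coeff j = (-1) ^ (d - j) * R.esymm (d - j) := by
    intro j hj
    rw [hQC_prod, Multiset.prod_X_sub_C_coeff R (by rw [hcardR]; exact hj), hcardR]
  have habs_coeff : ∀ j, ‖QC.coeff j‖ = |((Q.coeff j : ℚ) : ℝ)| := by
    intro j
    rw [hQC_def, Polynomial.coeff_map]
    rw [show (algebraMap ℚ ℂ) (Q.coeff j) = (((Q.coeff j : ℝ) : ℝ) : ℂ) by
      rw [eq_ratCast]; push_cast; ring]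
    rw [Complex.norm_real, Real.norm_eq_abs]
  -- bound on |t^n + t^{-n}|
  have hSsum_le : ‖S.sum‖ ≤ (d : ℝ) - 2 := by
    refine le_trans (norm_multiset_sum_le _) ?_
    have hb : ∀ x ∈ S.map norm, x ≤ (1:ℝ) := by
      intro x hx
      obtain ⟨c, hc, rfl⟩ := Multiset.mem_map.1 hx
      rw [hSabs c hc]
    refine le_trans (Multiset.sum_le_card_nsmul _ 1 hb) ?_
    rw [Multiset.card_map, hcardS]
    have : ((d - 2 : ℕ) : ℝ) = (d : ℝ) - 2 := by
      have : (2:ℕ) ≤ d := by omega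
      push_cast [Nat.cast_sub this]
      ring
    simp [this]
  have hd1 : d - (d - 1) = 1 := by omega
  have hcoeff_d1 : ‖QC.coeff (d - 1)‖ = ‖R.sum‖ := by
    rw [hcoeff (d - 1) (by omega), hd1, salem_esymm_sum]
    rw [norm_mul, norm_pow]
    simp
  have hs_le : ‖t ^ n + t⁻¹ ^ n‖ ≤ |((Q.coeff (d-1) : ℚ) : ℝ)| + ((d : ℝ) - 2) := by
    have hsum_eq : t ^ n + t⁻¹ ^ n = R.sum - S.sum := by
      rw [hR_eq]
      simp only [Multiset.sum_cons]
      ring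
    rw [hsum_eq]
    refine le_trans (norm_sub_le _ _) ?_
    rw [← hcoeff_d1, habs_coeff]
    exact add_le_add le_rfl hSsum_le
  -- main computation
  obtain ⟨m, rfl⟩ : ∃ m, k = m + 1 := ⟨k - 1, by omega⟩
  have hidx : d - (d - (m + 1) - 1) = m + 1 + 1 := by omega
  have hlhs : |((Q.coeff (d - (m+1) - 1) : ℚ) : ℝ)| = ‖R.esymm (m + 1 + 1)‖ := by
    rw [← habs_coeff, hcoeff (d - (m+1) - 1) (by omega), hidx]
    rw [norm_mul, norm_pow]
    simp
  have h1 : t ^ n * t⁻¹ ^ n = 1 := by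
    rw [← mul_pow, mul_inv_cancel₀ ht0, one_pow]
  have e1 := salem_esymm_cons (t ^ n) (t⁻¹ ^ n ::ₘ S) (m + 1)
  have e2 := salem_esymm_cons (t⁻¹ ^ n) S (m + 1)
  have e3 := salem_esymm_cons (t⁻¹ ^ n) S m
  have hes : R.esymm (m + 1 + 1) =
      S.esymm (m + 1 + 1) + (t ^ n + t⁻¹ ^ n) * S.esymm (m + 1) + S.esymm m := by
    rw [hR_eq, e1, e2, e3]
    linear_combination S.esymm m * h1
  have b1 : ‖S.esymm (m + 1 + 1)‖ ≤ ((d - 2).choose (m + 1 + 1) : ℝ) := by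
    have := salem_esymm_bound S hSabs (m + 1 + 1)
    rwa [hcardS] at this
  have b2 : ‖S.esymm (m + 1)‖ ≤ ((d - 2).choose (m + 1) : ℝ) := by
    have := salem_esymm_bound S hSabs (m + 1)
    rwa [hcardS] at this
  have b3 : ‖S.esymm m‖ ≤ ((d - 2).choose m : ℝ) := by
    have := salem_esymm_bound S hSabs m
    rwa [hcardS] at this
  have htri : ‖R.esymm (m + 1 + 1)‖ ≤
      ‖S.esymm (m + 1 + 1)‖ +
        ‖t ^ n + t⁻¹ ^ n‖ * ‖S.esymm (m + 1)‖ +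
        ‖S.esymm m‖ := by
    rw [hes]
    calc ‖S.esymm (m + 1 + 1) + (t ^ n + t⁻¹ ^ n) * S.esymm (m + 1) + S.esymm m‖
        ≤ ‖S.esymm (m + 1 + 1) + (t ^ n + t⁻¹ ^ n) * S.esymm (m + 1)‖ +
            ‖S.esymm m‖ := norm_add_le _ _
      _ ≤ ‖S.esymm (m + 1 + 1)‖ + ‖(t ^ n + t⁻¹ ^ n) * S.esymm (m + 1)‖ +
            ‖S.esymm m‖ := by
            exact add_le_add (norm_add_le _ _) le_rfl
      _ = _ := by rw [norm_mul]
  have hmul : ‖t ^ n + t⁻¹ ^ n‖ * ‖S.esymm (m + 1)‖ ≤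
      ((d - 2).choose (m + 1) : ℝ) * (|((Q.coeff (d-1) : ℚ) : ℝ)| + (d : ℝ) - 2) := by
    have h := mul_le_mul hs_le b2 (norm_nonneg _)
      (by
        have h4 : (4:ℝ) ≤ (d:ℝ) := by exact_mod_cast hd4
        have h5 := abs_nonneg (((Q.coeff (d-1) : ℚ) : ℝ))
        linarith)
    calc ‖t ^ n + t⁻¹ ^ n‖ * ‖S.esymm (m + 1)‖
        ≤ (|((Q.coeff (d-1) : ℚ) : ℝ)| + ((d : ℝ) - 2)) * ((d - 2).choose (m + 1) : ℝ) := h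
      _ = ((d - 2).choose (m + 1) : ℝ) * (|((Q.coeff (d-1) : ℚ) : ℝ)| + (d : ℝ) - 2) := by ring
  rw [hlhs]
  have hfin : (m + 1 - 1 : ℕ) = m := by omega
  rw [hfin]
  calc ‖R.esymm (m + 1 + 1)‖
      ≤ ‖S.esymm (m + 1 + 1)‖ +
          ‖t ^ n + t⁻¹ ^ n‖ * ‖S.esymm (m + 1)‖ +
          ‖S.esymm m‖ := htri
    _ ≤ ((d - 2).choose (m + 1 + 1) : ℝ) +
          ((d - 2).choose (m + 1) : ℝ) * (|((Q.coeff (d-1) : ℚ) : ℝ)| + (d : ℝ) - 2) +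
          ((d - 2).choose m : ℝ) := add_le_add (add_le_add b1 hmul) b3
    _ = ((d - 2).choose (m + 1) : ℝ) * (|((Q.coeff (d-1) : ℚ) : ℝ)| + (d : ℝ) - 2) +
          ((d - 2).choose m : ℝ) + ((d - 2).choose (m + 1 + 1) : ℝ) := by ring
end
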